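/- arXiv:1810.09211 — 3 statements merged into one kernel-verified Lean document; each statement's English description precedes it below -/
import Mathlib

section
/- Let v : ℝ² → ℝ be continuously differentiable on an open set containing T. Then sin∠(S',S'') · ∫_{S'} v φ_z dH¹ = ∫_T ( φ_z(x) · ⟨∇v(x), μ''⟩ + |S''|⁻¹ · v(x) ) dx. (This is the exact divergence-theorem identity underlying the scaled trace inequality (4a) of the paper.) -/
open MeasureTheory
open scoped RealInnerProductSpace

noncomputable section DivergenceAux

open Set

abbrev DivAuxE2 := EuclideanSpace ℝ (Fin 2)

/-- Integral over a segment w.r.t. 1-dimensional Hausdorff measure as a parametrized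
interval integral. -/
lemma divAux_seg_int (z y : DivAuxE2) (hzy : y - z ≠ 0) (f : DivAuxE2 → ℝ) :
    ∫ x in segment ℝ z y, f x ∂(μH[1]) = ‖y - z‖ * ∫ t in (0:ℝ)..1, f (z + t • (y - z)) := by
  set e := y - z with he
  set u := ‖e‖⁻¹ • e with hu
  have hnu : ‖u‖ = 1 := norm_smul_inv_norm hzy
  set ι : ℝ → DivAuxE2 := fun r => z + r • u with hι
  have hiso : Isometry ι := by
    apply Isometry.of_dist_eq
    intro a b
    simp only [hι, dist_eq_norm, add_sub_add_left_eq_sub, ← sub_smul, norm_smul, hnu,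
      Real.norm_eq_abs, mul_one]
  have hemb : MeasurableEmbedding ι :=
    hiso.isClosedEmbedding.measurableEmbedding
  have hmap : Measure.map ι volume = (μH[1] : Measure DivAuxE2).restrict (Set.range ι) := by
    ext s hs
    rw [Measure.map_apply hiso.continuous.measurable hs, Measure.restrict_apply hs,
      ← Set.image_preimage_eq_inter_range, hiso.hausdorffMeasure_image (Or.inl zero_le_one)]
    rw [show (μH[1] : Measure ℝ) = volume from MeasureTheory.hausdorffMeasure_real]
  have hEu : ‖e‖ • u = e := by
    rw [hu, smul_smul, mul_inv_cancel₀ (norm_ne_zero_iff.2 hzy), one_smul]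
  have hseg : segment ℝ z y = ι '' Set.Icc 0 ‖e‖ := by
    rw [segment_eq_image' ℝ z y, ← he]
    ext x
    constructor
    · rintro ⟨θ, hθ, rfl⟩
      exact ⟨θ * ‖e‖, ⟨mul_nonneg hθ.1 (norm_nonneg e),
        by nlinarith [hθ.2, norm_nonneg e]⟩, by
          simp only [hι]
          rw [mul_smul, hEu]⟩
    · rintro ⟨r, hr, rfl⟩
      refine ⟨r / ‖e‖, ⟨div_nonneg hr.1 (norm_nonneg e), ?_⟩, ?_⟩
      · rw [div_le_one (norm_pos_iff.2 hzy)]; exact hr.2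
      · simp only [hι]
        rw [div_eq_mul_inv, mul_comm, mul_smul, smul_comm]
  have hpre : ι ⁻¹' segment ℝ z y = Set.Icc 0 ‖e‖ := by
    rw [hseg, Set.preimage_image_eq _ hiso.injective]
  have hmeas_seg : MeasurableSet (segment ℝ z y) := by
    rw [hseg]
    exact (hemb.measurableSet_image.2 measurableSet_Icc)
  calc ∫ x in segment ℝ z y, f x ∂(μH[1])
      = ∫ x in segment ℝ z y, f x ∂((μH[1] : Measure DivAuxE2).restrict (Set.range ι)) := by
        rw [Measure.restrict_restrict hmeas_seg, Set.inter_eq_left.2 (by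
          rw [hseg]; exact Set.image_subset_range _ _)]
    _ = ∫ x in segment ℝ z y, f x ∂(Measure.map ι volume) := by rw [hmap]
    _ = ∫ r in ι ⁻¹' segment ℝ z y, f (ι r) := hemb.setIntegral_map f _
    _ = ∫ r in Set.Icc (0:ℝ) ‖e‖, f (z + r • u) := by rw [hpre]
    _ = ∫ r in (0:ℝ)..‖e‖, f (z + r • u) := by
        rw [intervalIntegral.integral_of_le (norm_nonneg e), integral_Icc_eq_integral_Ioc]
    _ = ‖e‖ * ∫ t in (0:ℝ)..1, f (z + t • e) := by
        have := intervalIntegral.integral_comp_mul_left (a := (0:ℝ)) (b := 1)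
          (fun r => f (z + r • u)) (c := ‖e‖) (norm_ne_zero_iff.2 hzy)
        simp only [mul_zero, mul_one] at this
        have heq : (fun t : ℝ => f (z + (‖e‖ * t) • u)) = fun t : ℝ => f (z + t • e) := by
          funext t
          rw [mul_comm, mul_smul, hEu]
        rw [heq] at this
        rw [this, smul_eq_mul, ← mul_assoc, mul_inv_cancel₀ (norm_ne_zero_iff.2 hzy), one_mul]

/-- The standard triangle in `ℝ × ℝ`. -/
def divAuxTri : Set (ℝ × ℝ) := {p | 0 ≤ p.1 ∧ 0 ≤ p.2 ∧ p.1 + p.2 ≤ 1}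

lemma divAuxTri_eq :
    divAuxTri = convexHull ℝ {((0:ℝ),(0:ℝ)), ((1:ℝ),(0:ℝ)), ((0:ℝ),(1:ℝ))} := by
  apply le_antisymm
  · intro p hp
    obtain ⟨h1, h2, h3⟩ := hp
    have hsum : p = (1 - p.1 - p.2) • ((0:ℝ),(0:ℝ)) + (p.1 • ((1:ℝ),(0:ℝ)) +
        p.2 • ((0:ℝ),(1:ℝ))) := by
      apply Prod.ext <;> simp
    rw [show (1 - p.1 - p.2) • ((0:ℝ),(0:ℝ)) + (p.1 • ((1:ℝ),(0:ℝ)) + p.2 • ((0:ℝ),(1:ℝ)))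
      = ∑ i : Fin 3, (![1 - p.1 - p.2, p.1, p.2] i) • (![((0:ℝ),(0:ℝ)), ((1:ℝ),(0:ℝ)),
        ((0:ℝ),(1:ℝ))] i) from by simp [Fin.sum_univ_three, add_assoc]] at hsum
    rw [hsum]
    have hc := convex_convexHull ℝ ({((0:ℝ),(0:ℝ)), ((1:ℝ),(0:ℝ)), ((0:ℝ),(1:ℝ))} :
      Set (ℝ × ℝ))
    have m0 : ((0:ℝ),(0:ℝ)) ∈ convexHull ℝ ({((0:ℝ),(0:ℝ)), ((1:ℝ),(0:ℝ)), ((0:ℝ),(1:ℝ))} :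
      Set (ℝ × ℝ)) := subset_convexHull ℝ _ (by simp)
    have m1 : ((1:ℝ),(0:ℝ)) ∈ convexHull ℝ ({((0:ℝ),(0:ℝ)), ((1:ℝ),(0:ℝ)), ((0:ℝ),(1:ℝ))} :
      Set (ℝ × ℝ)) := subset_convexHull ℝ _ (by simp)
    have m2 : ((0:ℝ),(1:ℝ)) ∈ convexHull ℝ ({((0:ℝ),(0:ℝ)), ((1:ℝ),(0:ℝ)), ((0:ℝ),(1:ℝ))} :
      Set (ℝ × ℝ)) := subset_convexHull ℝ _ (by simp)
    apply hc.sum_mem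
    · intro i _
      fin_cases i <;> simp <;> linarith
    · simp [Fin.sum_univ_three]; ring
    · intro i _
      fin_cases i
      · exact m0
      · exact m1
      · exact m2
  · apply convexHull_min
    · intro q hq
      simp only [Set.mem_insert_iff, Set.mem_singleton_iff] at hq
      rcases hq with rfl | rfl | rfl <;> constructor <;> norm_num
    · intro x hx y hy a b ha hb hab
      obtain ⟨hx1, hx2, hx3⟩ := hx
      obtain ⟨hy1, hy2, hy3⟩ := hy
      refine ⟨?_, ?_, ?_⟩ <;>
        simp only [Prod.fst_add, Prod.snd_add, Prod.smul_fst, Prod.smul_snd, smul_eq_mul] <;>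
        nlinarith

lemma divAuxTri_closed : IsClosed divAuxTri := by
  have : divAuxTri = {p : ℝ × ℝ | 0 ≤ p.1} ∩ ({p | 0 ≤ p.2} ∩ {p | p.1 + p.2 ≤ 1}) := by
    ext p; simp [divAuxTri, and_assoc]
  rw [this]
  exact (isClosed_le continuous_const continuous_fst).inter
    ((isClosed_le continuous_const continuous_snd).inter
      (isClosed_le (continuous_fst.add continuous_snd) continuous_const))

lemma divAuxTri_compact : IsCompact divAuxTri := by
  refine IsCompact.of_isClosed_subset (isCompact_Icc (a := ((0:ℝ),(0:ℝ))) (b := ((1:ℝ),(1:ℝ))))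
    divAuxTri_closed ?_
  rintro ⟨x, y⟩ ⟨h1, h2, h3⟩
  constructor <;> constructor <;> simp_all <;> linarith

lemma divAuxTri_meas : MeasurableSet divAuxTri := divAuxTri_closed.measurableSet

/-- Fubini plus the fundamental theorem of calculus on the standard triangle. -/
lemma divAux_triangle_ftc (g g' : ℝ × ℝ → ℝ) (V : Set (ℝ × ℝ)) (hTV : divAuxTri ⊆ V)
    (hd : ∀ p ∈ V, HasDerivAt (fun s => g (p.1, s)) (g' p) p.2)
    (hc : ContinuousOn g' V) (hg0 : ∀ t ∈ Icc (0:ℝ) 1, g (t, 0) = 0) :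
    ∫ p in divAuxTri, g' p = ∫ t in (0:ℝ)..1, g (t, 1 - t) := by
  have hInt : IntegrableOn g' divAuxTri := (hc.mono hTV).integrableOn_compact divAuxTri_compact
  have hind : Integrable (divAuxTri.indicator g') := (integrable_indicator_iff divAuxTri_meas).2 hInt
  rw [← integral_indicator divAuxTri_meas]
  rw [Measure.volume_eq_prod, integral_prod _ (by rw [← Measure.volume_eq_prod]; exact hind)]
  have key : ∀ t : ℝ, (∫ s, divAuxTri.indicator g' (t, s)) =
      (Icc (0:ℝ) 1).indicator (fun t => g (t, 1 - t)) t := by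
    intro t
    by_cases ht : t ∈ Icc (0:ℝ) 1
    · have h1t : 0 ≤ 1 - t := by linarith [ht.2]
      have hslice : ∀ s, divAuxTri.indicator g' (t, s) =
          (Icc (0:ℝ) (1 - t)).indicator (fun s => g' (t, s)) s := by
        intro s
        by_cases hs : s ∈ Icc (0:ℝ) (1 - t)
        · rw [Set.indicator_of_mem hs,
            Set.indicator_of_mem (show (t,s) ∈ divAuxTri from ⟨ht.1, hs.1, by
              have := hs.2; simp only; linarith⟩)]
        · rw [Set.indicator_of_notMem hs, Set.indicator_of_notMem (by
            intro hmem
            exact hs ⟨hmem.2.1, by have := hmem.2.2; simp only at this ⊢; linarith⟩)]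
      rw [show (fun s => divAuxTri.indicator g' (t, s)) = fun s =>
        (Icc (0:ℝ) (1 - t)).indicator (fun s => g' (t, s)) s from funext hslice]
      rw [integral_indicator measurableSet_Icc, integral_Icc_eq_integral_Ioc,
        ← intervalIntegral.integral_of_le h1t]
      have hFTC := intervalIntegral.integral_eq_sub_of_hasDerivAt
        (f := fun s => g (t, s)) (f' := fun s => g' (t, s)) (a := 0) (b := 1 - t) ?_ ?_
      · rw [hFTC, hg0 t ht, sub_zero, Set.indicator_of_mem ht]
      · intro s hs
        rw [Set.uIcc_of_le h1t] at hs
        have hmem : (t, s) ∈ divAuxTri := ⟨ht.1, hs.1, by simp only; linarith [hs.2]⟩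
        exact hd (t, s) (hTV hmem)
      · apply ContinuousOn.intervalIntegrable
        exact ContinuousOn.comp hc ((Continuous.prodMk_right t).continuousOn)
          (fun s hs => by
            rw [Set.uIcc_of_le h1t] at hs
            exact hTV ⟨ht.1, hs.1, by simp only; linarith [hs.2]⟩)
    · have hz : ∀ s, divAuxTri.indicator g' (t, s) = 0 := by
        intro s
        apply Set.indicator_of_notMem
        intro hmem
        simp only [Set.mem_Icc, not_and_or, not_le] at ht
        obtain ⟨h1, h2, h3⟩ := hmem
        simp only at h1 h2 h3
        rcases ht with h | h <;> linarith
      simp only [hz, integral_zero, Set.indicator_of_notMem ht]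
  simp only [key]
  rw [integral_indicator measurableSet_Icc, integral_Icc_eq_integral_Ioc,
    ← intervalIntegral.integral_of_le zero_le_one]

/-- Hat functions are differentiable with derivative their linear part. -/
lemma divAux_affine_hasFDerivAt (φ : DivAuxE2 →ᵃ[ℝ] ℝ) (x : DivAuxE2) :
    HasFDerivAt (φ : DivAuxE2 → ℝ) (LinearMap.toContinuousLinearMap φ.linear) x := by
  have hd : (φ : DivAuxE2 → ℝ) = fun y => (LinearMap.toContinuousLinearMap φ.linear) y + φ 0 := by
    funext y
    conv_lhs => rw [φ.decomp]
    simp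
  rw [hd]
  exact (LinearMap.toContinuousLinearMap φ.linear).hasFDerivAt.add_const (φ 0)

lemma divAux_affine_linear_sub (φ : DivAuxE2 →ᵃ[ℝ] ℝ) (a b : DivAuxE2) :
    φ.linear (a - b) = φ a - φ b := by
  have := φ.map_vadd b (a - b)
  simp only [vadd_eq_add, sub_add_cancel] at this
  rw [this]; ring

end DivergenceAux

set_option maxHeartbeats 2000000 in
/-- The exact divergence-theorem identity underlying the scaled trace inequality (4a):
for a triangle `T = conv {z, z', z''}` with hat function `φ` at `z`, unit vector
`μ'' = (z - z')/‖z - z'‖` along the edge `S'' = [z, z']`, and `v` continuously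
differentiable on an open set containing `T`,
`sin∠(S',S'') ⬝ ∫_{S'} v φ dH¹ = ∫_T (φ ⬝ ⟨∇v, μ''⟩ + |S''|⁻¹ v)`. -/
theorem divergence_identity_hat_trace
    (z z' z'' : EuclideanSpace ℝ (Fin 2))
    (hind : AffineIndependent ℝ ![z, z', z''])
    (T : Set (EuclideanSpace ℝ (Fin 2)))
    (hT : T = convexHull ℝ {z, z', z''})
    (φ : EuclideanSpace ℝ (Fin 2) →ᵃ[ℝ] ℝ)
    (hφz : φ z = 1) (hφz' : φ z' = 0) (hφz'' : φ z'' = 0)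
    (μ'' : EuclideanSpace ℝ (Fin 2))
    (hμ'' : μ'' = ‖z - z'‖⁻¹ • (z - z'))
    (v : EuclideanSpace ℝ (Fin 2) → ℝ)
    (U : Set (EuclideanSpace ℝ (Fin 2)))
    (hU : IsOpen U) (hTU : T ⊆ U) (hv : ContDiffOn ℝ 1 v U) :
    Real.sin (EuclideanGeometry.angle z' z z'') *
        ∫ x in segment ℝ z z'', v x * φ x ∂(μH[1]) =
      ∫ x in T, (φ x * ⟪gradient v x, μ''⟫ + (dist z z')⁻¹ * v x) := by
  classical
  set d1 : DivAuxE2 := z - z' with hd1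
  set d2 : DivAuxE2 := z'' - z' with hd2
  -- linear independence of d1 and d2
  have hlinind : ∀ α β : ℝ, α • d1 + β • d2 = 0 → α = 0 ∧ β = 0 := by
    intro α β hαβ
    have h := affineIndependent_iff.mp hind Finset.univ ![α, -(α + β), β]
      (by
        simp only [Fin.sum_univ_three, Matrix.cons_val_zero, Matrix.cons_val_one,
          Matrix.head_cons, Matrix.cons_val_two, Matrix.tail_cons]
        ring)
      (by
        simp only [Fin.sum_univ_three, Matrix.cons_val_zero, Matrix.cons_val_one, Matrix.head_cons,
          Matrix.cons_val_two, Matrix.tail_cons]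
        rw [hd1, hd2] at hαβ
        have : α • (z - z') + β • (z'' - z') = α • z + -(α + β) • z' + β • z'' := by module
        rw [this] at hαβ
        exact hαβ)
    refine ⟨h 0 (Finset.mem_univ _), h 2 (Finset.mem_univ _)⟩
  have hd1ne : d1 ≠ 0 := by
    intro h
    have := (hlinind 1 0 (by rw [h]; simp)).1
    norm_num at this
  have hzz'' : z'' - z ≠ 0 := by
    intro h
    have hz : (-1 : ℝ) • d1 + (1 : ℝ) • d2 = 0 := by
      rw [hd1, hd2]
      have : z'' - z' - (z - z') = z'' - z := by abel
      rw [neg_one_smul, one_smul, ← sub_eq_neg_add, this, h]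
    have := (hlinind (-1) 1 hz).1
    norm_num at this
  have hL : ‖z - z'‖ ≠ 0 := norm_ne_zero_iff.2 hd1ne
  -- the measurable equivalence E2 ≃ ℝ × ℝ
  set χ : DivAuxE2 ≃ᵐ ℝ × ℝ :=
    (MeasurableEquiv.toLp 2 (Fin 2 → ℝ)).symm.trans MeasurableEquiv.finTwoArrow with hχ
  have hχap : ∀ x : DivAuxE2, χ x = (x 0, x 1) := fun _ => rfl
  have hχpres : MeasurePreserving χ :=
    (volume_preserving_finTwoArrow ℝ).comp
      (EuclideanSpace.volume_preserving_symm_measurableEquiv_toLp (Fin 2))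
  -- the linear map, its determinant, and the affine parametrization of T
  set B : DivAuxE2 →L[ℝ] DivAuxE2 :=
    ((EuclideanSpace.proj (0 : Fin 2)).smulRight d2) +
      ((EuclideanSpace.proj (1 : Fin 2)).smulRight d1) with hBdef
  have hB : ∀ x : DivAuxE2, B x = x 0 • d2 + x 1 • d1 := fun x => rfl
  have hdet : B.det = d2 0 * d1 1 - d2 1 * d1 0 := by
    have h := LinearMap.det_toMatrix ((EuclideanSpace.basisFun (Fin 2) ℝ).toBasis)
      (B : DivAuxE2 →ₗ[ℝ] DivAuxE2)
    rw [ContinuousLinearMap.det, ← h, Matrix.det_fin_two]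
    simp [LinearMap.toMatrix_apply, hB, EuclideanSpace.basisFun_apply,
      EuclideanSpace.single_apply]
    try ring
  set Blm : (ℝ × ℝ) →ₗ[ℝ] DivAuxE2 :=
    (LinearMap.fst ℝ ℝ ℝ).smulRight d2 + (LinearMap.snd ℝ ℝ ℝ).smulRight d1 with hBlm
  set Aff : (ℝ × ℝ) →ᵃ[ℝ] DivAuxE2 :=
    ⟨fun p => z' + Blm p, Blm, by intro p v'; simp only [vadd_eq_add, map_add]; abel⟩ with hAffdef
  have hAff : ∀ p : ℝ × ℝ, Aff p = z' + (p.1 • d2 + p.2 • d1) := fun p => rfl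
  set F : DivAuxE2 → DivAuxE2 := fun x => z' + B x with hF
  have hAffF : ∀ x : DivAuxE2, F x = Aff (χ x) := fun x => rfl
  -- T is the image of the standard triangle
  have hTA : T = Aff '' divAuxTri := by
    rw [hT, divAuxTri_eq, AffineMap.image_convexHull]
    congr 1
    rw [Set.image_insert_eq, Set.image_insert_eq, Set.image_singleton]
    have h0 : Aff ((0:ℝ),(0:ℝ)) = z' := by rw [hAff]; simp
    have h1 : Aff ((1:ℝ),(0:ℝ)) = z'' := by
      rw [hAff]; simp only [one_smul, zero_smul, add_zero, hd2]; abel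
    have h2 : Aff ((0:ℝ),(1:ℝ)) = z := by
      rw [hAff]; simp only [one_smul, zero_smul, zero_add, hd1]; abel
    rw [h0, h1, h2]
    ext w; simp only [Set.mem_insert_iff, Set.mem_singleton_iff]; tauto
  -- injectivity
  have hinj : Set.InjOn F (χ ⁻¹' divAuxTri) := by
    intro x _ y _ hxy
    have hBxy : B (x - y) = 0 := by
      have h0 : F x - F y = 0 := sub_eq_zero.2 hxy
      rw [hF] at h0
      simp only [add_sub_add_left_eq_sub, ← map_sub] at h0
      exact h0
    rw [hB] at hBxy
    have := hlinind ((x - y) 1) ((x - y) 0) (by rw [add_comm]; exact hBxy)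
    have hx0 : x 0 = y 0 := by
      have h := this.2
      simp only [PiLp.sub_apply] at h
      linarith
    have hx1 : x 1 = y 1 := by
      have h := this.1
      simp only [PiLp.sub_apply] at h
      linarith
    ext i
    fin_cases i
    · exact hx0
    · exact hx1
  have hTriE : MeasurableSet (χ ⁻¹' divAuxTri) := χ.measurable divAuxTri_meas
  have hFim : F '' (χ ⁻¹' divAuxTri) = Aff '' divAuxTri := by
    have h2 : ⇑χ '' (⇑χ ⁻¹' divAuxTri) = divAuxTri :=
      Set.image_preimage_eq _ χ.toEquiv.surjective
    calc F '' (⇑χ ⁻¹' divAuxTri)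
        = (fun x => Aff (χ x)) '' (⇑χ ⁻¹' divAuxTri) := Set.image_congr fun x _ => hAffF x
      _ = ⇑Aff '' (⇑χ '' (⇑χ ⁻¹' divAuxTri)) := (Set.image_image _ _ _).symm
      _ = ⇑Aff '' divAuxTri := by rw [h2]
  -- the integrand identity
  have hint_eq : ∀ x : DivAuxE2,
      φ x * ⟪gradient v x, μ''⟫ + (dist z z')⁻¹ * v x
        = ‖z - z'‖⁻¹ * ((fderiv ℝ v x) d1 * φ x + v x) := by
    intro x
    have h1 : ⟪gradient v x, μ''⟫ = (fderiv ℝ v x) μ'' :=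
      InnerProductSpace.toDual_symm_apply
    rw [h1, hμ'', ContinuousLinearMap.map_smul, smul_eq_mul, dist_eq_norm, ← hd1]
    ring
  -- the slice integrand
  set w : DivAuxE2 → ℝ := fun x => v x * φ x with hw
  set g : ℝ × ℝ → ℝ := fun p => w (Aff p) with hg
  set g' : ℝ × ℝ → ℝ := fun p => (fderiv ℝ v (Aff p)) d1 * φ (Aff p) + v (Aff p) with hg'
  -- continuity of Aff
  have hAffc : Continuous Aff := by
    have : Continuous fun p : ℝ × ℝ => z' + (p.1 • d2 + p.2 • d1) :=
      continuous_const.add ((continuous_fst.smul continuous_const).add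
        (continuous_snd.smul continuous_const))
    exact this
  have hφc : Continuous (φ : DivAuxE2 → ℝ) := by
    rw [φ.decomp]
    exact φ.linear.continuous_of_finiteDimensional.add continuous_const
  have hTriU : divAuxTri ⊆ Aff ⁻¹' U := fun p hp => by
    have : Aff p ∈ T := hTA ▸ Set.mem_image_of_mem Aff hp
    exact hTU this
  have hφd1 : φ.linear d1 = 1 := by rw [hd1, divAux_affine_linear_sub, hφz, hφz']; ring
  have hφd2 : φ.linear d2 = 0 := by rw [hd2, divAux_affine_linear_sub, hφz'', hφz']; ring
  have hderiv : ∀ p ∈ Aff ⁻¹' U, HasDerivAt (fun s => g (p.1, s)) (g' p) p.2 := by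
    intro p hp
    have hxU : Aff p ∈ U := hp
    have hAffps : ∀ s : ℝ, Aff (p.1, s) = (z' + p.1 • d2) + s • d1 := fun s => by
      rw [hAff, add_assoc]
    have hx2 : Aff p = (z' + p.1 • d2) + p.2 • d1 := by
      conv_lhs => rw [← Prod.mk.eta (p := p)]
      exact hAffps p.2
    have hP : HasDerivAt (fun s : ℝ => (z' + p.1 • d2) + s • d1) d1 p.2 := by
      simpa using ((hasDerivAt_id p.2).smul_const d1).const_add (z' + p.1 • d2)
    have hvd : DifferentiableAt ℝ v (Aff p) :=
      (hv.differentiableOn one_ne_zero).differentiableAt (hU.mem_nhds hxU)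
    have hvx : HasFDerivAt v (fderiv ℝ v (Aff p)) ((z' + p.1 • d2) + p.2 • d1) := by
      rw [← hx2]; exact hvd.hasFDerivAt
    have hφx : HasFDerivAt (φ : DivAuxE2 → ℝ) (LinearMap.toContinuousLinearMap φ.linear)
        ((z' + p.1 • d2) + p.2 • d1) := divAux_affine_hasFDerivAt φ _
    have hcv : HasDerivAt (fun s => v ((z' + p.1 • d2) + s • d1)) ((fderiv ℝ v (Aff p)) d1)
        p.2 := hvx.comp_hasDerivAt p.2 hP
    have hcφ : HasDerivAt (fun s => φ ((z' + p.1 • d2) + s • d1)) (φ.linear d1) p.2 := by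
      have h := hφx.comp_hasDerivAt p.2 hP
      exact h
    have hmul := hcv.mul hcφ
    rw [hφd1, mul_one] at hmul
    have hgrw : (fun s => g (p.1, s)) =
        fun s => v ((z' + p.1 • d2) + s • d1) * φ ((z' + p.1 • d2) + s • d1) := by
      funext s
      rw [hg, hw]
      simp only
      rw [hAffps]
    rw [← hx2] at hmul
    rw [hgrw, hg']
    exact hmul
  have hcont' : ContinuousOn g' (Aff ⁻¹' U) := by
    have hfd : ContinuousOn (fderiv ℝ v) U := hv.continuousOn_fderiv_of_isOpen hU le_rfl
    rw [hg']
    apply ContinuousOn.add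
    · apply ContinuousOn.mul
      · exact (hfd.comp hAffc.continuousOn (fun p hp => hp)).clm_apply continuousOn_const
      · exact (hφc.comp hAffc).continuousOn
    · exact hv.continuousOn.comp hAffc.continuousOn (fun p hp => hp)
  have hg0 : ∀ t ∈ Set.Icc (0:ℝ) 1, g (t, 0) = 0 := by
    intro t ht
    have hφ0 : φ (Aff (t, 0)) = 0 := by
      rw [hAff]
      simp only [zero_smul, add_zero]
      have h : φ (z' + t • d2) = t * φ.linear d2 + φ z' := by
        rw [add_comm z' (t • d2), ← vadd_eq_add, AffineMap.map_vadd, LinearMap.map_smul,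
          vadd_eq_add, smul_eq_mul]
      rw [h, hφd2, hφz']
      ring
    rw [hg, hw]
    simp only [hφ0, mul_zero]
  have hFTC := divAux_triangle_ftc g g' (Aff ⁻¹' U) hTriU hderiv hcont' hg0
  have hbd : ∀ t : ℝ, g (t, 1 - t) = w (z + t • (z'' - z)) := by
    intro t
    have hAb : Aff (t, 1 - t) = z + t • (z'' - z) := by
      rw [hAff]
      show z' + (t • d2 + (1 - t) • d1) = z + t • (z'' - z)
      rw [hd1, hd2]
      module
    show w (Aff (t, 1 - t)) = w (z + t • (z'' - z))
    rw [hAb]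
  -- right-hand side chain
  have hRHS : (∫ x in T, (φ x * ⟪gradient v x, μ''⟫ + (dist z z')⁻¹ * v x))
      = |B.det| * (‖z - z'‖⁻¹ * ∫ t in (0:ℝ)..1, w (z + t • (z'' - z))) := by
    rw [hTA, ← hFim]
    rw [integral_image_eq_integral_abs_det_fderiv_smul volume hTriE
      (fun x _ => ((B.hasFDerivAt).const_add z').hasFDerivWithinAt) hinj
      (fun x => φ x * ⟪gradient v x, μ''⟫ + (dist z z')⁻¹ * v x)]
    rw [integral_smul]
    have htrans : (∫ x in χ ⁻¹' divAuxTri,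
        (φ (F x) * ⟪gradient v (F x), μ''⟫ + (dist z z')⁻¹ * v (F x)))
        = ∫ p in divAuxTri,
            (φ (Aff p) * ⟪gradient v (Aff p), μ''⟫ + (dist z z')⁻¹ * v (Aff p)) :=
      hχpres.setIntegral_preimage_emb χ.measurableEmbedding
        (fun y => φ (Aff y) * ⟪gradient v (Aff y), μ''⟫ + (dist z z')⁻¹ * v (Aff y)) divAuxTri
    rw [htrans]
    have hpt : ∀ p : ℝ × ℝ, φ (Aff p) * ⟪gradient v (Aff p), μ''⟫ + (dist z z')⁻¹ * v (Aff p)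
        = ‖z - z'‖⁻¹ * g' p := fun p => by rw [hint_eq (Aff p), hg']
    simp only [hpt]
    rw [integral_const_mul, hFTC]
    simp only [hbd]
    rw [smul_eq_mul]
  rw [hRHS, divAux_seg_int z z'' hzz'' (fun x => v x * φ x)]
  have hsin : Real.sin (EuclideanGeometry.angle z' z z'') * (‖z' - z‖ * ‖z'' - z‖)
      = |B.det| := by
    rw [show EuclideanGeometry.angle z' z z'' =
      InnerProductGeometry.angle (z' - z) (z'' - z) from rfl]
    rw [InnerProductGeometry.sin_angle_mul_norm_mul_norm, hdet, ← Real.sqrt_sq_eq_abs]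
    congr 1
    simp only [PiLp.inner_apply, RCLike.inner_apply, conj_trivial, Fin.sum_univ_two,
      PiLp.sub_apply, hd1, hd2]
    ring
  have hwI : (∫ t in (0:ℝ)..1, v (z + t • (z'' - z)) * φ (z + t • (z'' - z)))
      = ∫ t in (0:ℝ)..1, w (z + t • (z'' - z)) := rfl
  rw [hwI, ← hsin, norm_sub_rev z z']
  have hL' : ‖z' - z‖ ≠ 0 := by rwa [norm_sub_rev] at hL
  field_simp
end

section
/- For t ∈ [0,1] set a_t := z'' + t(z − z'') ∈ S' and b_t := z' + t(z − z') ∈ S''. Then for every function f : ℝ² → ℝ that is continuous on T, ∫₀¹ ( ∫_{[b_t, a_t]} f dH¹ ) dt = (|S| / (2|T|)) · ∫_T f(x) dx, where [b_t, a_t] is the segment joining b_t and a_t (which lies in T and is parallel to S). (This Fubini-type slicing identity is the key measure-theoretic step in the averaging argument proving inequality (4b) of the paper.) -/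
open MeasureTheory Set
open scoped ENNReal NNReal

variable {E : Type*} [NormedAddCommGroup E] [NormedSpace ℝ E]
  [MeasurableSpace E] [BorelSpace E] [CompleteSpace E]

lemma lineMap_me {x y : E} (hxy : x ≠ y) :
    MeasurableEmbedding (AffineMap.lineMap x y : ℝ → E) :=
  ((antilipschitzWith_lineMap hxy).isClosedEmbedding
    (lipschitzWith_lineMap x y).uniformContinuous).measurableEmbedding

lemma restrict_segment (x y : E) :
    (μH[1] : Measure E).restrict (segment ℝ x y) =
      (nndist x y : ℝ≥0∞) • Measure.map (AffineMap.lineMap x y)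
        (volume.restrict (Icc (0:ℝ) 1)) := by
  rcases eq_or_ne x y with rfl | hxy
  · rw [segment_same, Measure.restrict_eq_zero.mpr, nndist_self]
    · simp
    · simpa using hausdorffMeasure_segment x x
  · have hL := lineMap_me hxy
    refine Measure.ext fun B hB => ?_
    rw [Measure.restrict_apply hB, Measure.smul_apply, smul_eq_mul,
      Measure.map_apply hL.measurable hB, Measure.restrict_apply (hL.measurable hB)]
    have himg : AffineMap.lineMap x y '' ((AffineMap.lineMap x y) ⁻¹' B ∩ Icc (0:ℝ) 1)
        = B ∩ segment ℝ x y := by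
      rw [segment_eq_image_lineMap, Set.inter_comm ((AffineMap.lineMap x y) ⁻¹' B),
        Set.image_inter_preimage]
      exact Set.inter_comm _ _
    calc μH[1] (B ∩ segment ℝ x y) = μH[1] (AffineMap.lineMap x y ''
          ((AffineMap.lineMap x y) ⁻¹' B ∩ Icc (0:ℝ) 1)) := by rw [himg]
      _ = nndist x y • μH[1] ((AffineMap.lineMap x y) ⁻¹' B ∩ Icc (0:ℝ) 1) :=
          MeasureTheory.hausdorffMeasure_lineMap_image x y _
      _ = (nndist x y : ℝ≥0∞) * volume ((AffineMap.lineMap x y) ⁻¹' B ∩ Icc (0:ℝ) 1) := by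
          rw [MeasureTheory.hausdorffMeasure_real]; rfl

lemma setIntegral_segment (x y : E) (f : E → ℝ) :
    ∫ p in segment ℝ x y, f p ∂(μH[1]) =
      dist x y * ∫ s in Icc (0:ℝ) 1, f (x + s • (y - x)) := by
  rcases eq_or_ne x y with rfl | hxy
  · rw [segment_same]
    rw [show (μH[1] : Measure E).restrict {x} = 0 from Measure.restrict_eq_zero.mpr (by
      simpa using hausdorffMeasure_segment x x)]
    simp
  · have hL := lineMap_me hxy
    calc ∫ p in segment ℝ x y, f p ∂(μH[1])
        = ∫ p, f p ∂((nndist x y : ℝ≥0∞) • Measure.map (AffineMap.lineMap x y)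
            (volume.restrict (Icc (0:ℝ) 1))) := by rw [← restrict_segment]
      _ = dist x y * ∫ p, f p ∂(Measure.map (AffineMap.lineMap x y)
            (volume.restrict (Icc (0:ℝ) 1))) := by
          rw [integral_smul_measure, ENNReal.coe_toReal, coe_nndist, smul_eq_mul]
      _ = dist x y * ∫ s in Icc (0:ℝ) 1, f (AffineMap.lineMap x y s) := by
          rw [hL.integral_map]
      _ = dist x y * ∫ s in Icc (0:ℝ) 1, f (x + s • (y - x)) := by
          congr 1
          refine setIntegral_congr_fun measurableSet_Icc fun s _ => ?_
          rw [AffineMap.lineMap_apply_module']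
          rw [add_comm]

noncomputable section
abbrev E2 := EuclideanSpace ℝ (Fin 2)

lemma e2_ext {x y : E2} (h0 : x 0 = y 0) (h1 : x 1 = y 1) : x = y := by
  ext i; fin_cases i
  · exact h0
  · exact h1

lemma indep_pair {z z' z'' : E2} (hind : AffineIndependent ℝ ![z, z', z'']) :
    ∀ a b : ℝ, a • (z - z') + b • (z'' - z') = 0 → a = 0 ∧ b = 0 := by
  intro a b hab
  rw [affineIndependent_iff] at hind
  have h := hind Finset.univ ![a, -(a+b), b] (by
    simp [Fin.sum_univ_three]; try ring) (by
    simp only [Fin.sum_univ_three, Matrix.cons_val_zero, Matrix.cons_val_one, Matrix.head_cons,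
      Matrix.cons_val_two, Matrix.tail_cons]
    have h2 : a • z + -(a+b) • z' + b • z'' = a • (z - z') + b • (z'' - z') := by module
    rw [h2, hab])
  exact ⟨by simpa using h 0 (Finset.mem_univ _), by simpa using h 2 (Finset.mem_univ _)⟩

lemma det_ne_zero {z z' z'' : E2} (hind : AffineIndependent ℝ ![z, z', z'']) :
    (z - z') 0 * (z'' - z') 1 - (z - z') 1 * (z'' - z') 0 ≠ 0 := by
  intro hD
  have hvw := indep_pair hind
  set v := z - z' with hv
  set w := z'' - z' with hw
  have h1 := hvw (w 1) (-(v 1)) (e2_ext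
    (by simp only [PiLp.add_apply, PiLp.smul_apply, PiLp.zero_apply, smul_eq_mul]; nlinarith)
    (by simp only [PiLp.add_apply, PiLp.smul_apply, PiLp.zero_apply, smul_eq_mul]; ring))
  have h2 := hvw (w 0) (-(v 0)) (e2_ext
    (by simp only [PiLp.add_apply, PiLp.smul_apply, PiLp.zero_apply, smul_eq_mul]; ring)
    (by simp only [PiLp.add_apply, PiLp.smul_apply, PiLp.zero_apply, smul_eq_mul]; nlinarith))
  have hv0 : v = 0 := e2_ext (by have := h2.2; simpa [neg_eq_zero] using this) (by have := h1.2; simpa [neg_eq_zero] using this)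
  obtain ⟨h, -⟩ := hvw 1 0 (by simp [← hv, hv0])
  exact one_ne_zero h
end
noncomputable section
def Phi (z z' z'' : E2) (t σ : ℝ) : E2 := z' + t • (z - z') + (σ * (1 - t)) • (z'' - z')

lemma T_eq (z z' z'' : E2) :
    convexHull ℝ {z, z', z''} =
      {q | ∃ t ∈ Icc (0:ℝ) 1, ∃ σ ∈ Icc (0:ℝ) 1, q = Phi z z' z'' t σ} := by
  rw [show ({z, z', z''} : Set E2) = insert z {z', z''} from rfl,
    convexHull_insert ⟨z', by simp⟩, convexHull_pair]
  ext q
  simp only [mem_convexJoin, mem_singleton_iff, exists_eq_left, mem_setOf_eq]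
  constructor
  · rintro ⟨y, hy, hq⟩
    rw [segment_eq_image'] at hy
    obtain ⟨σ, hσ, rfl⟩ := hy
    rw [segment_symm, segment_eq_image'] at hq
    obtain ⟨t, ht, rfl⟩ := hq
    exact ⟨t, ht, σ, hσ, by rw [Phi]; module⟩
  · rintro ⟨t, ht, σ, hσ, rfl⟩
    refine ⟨z' + σ • (z'' - z'), ?_, ?_⟩
    · rw [segment_eq_image']; exact ⟨σ, hσ, rfl⟩
    · rw [segment_symm, segment_eq_image']
      exact ⟨t, ht, by rw [Phi]; module⟩
end
noncomputable section
def dPhi (z z' z'' : E2) (p : E2) : E2 →L[ℝ] E2 :=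
  (EuclideanSpace.proj (0 : Fin 2) : E2 →L[ℝ] ℝ).smulRight (z - z') +
  ((1 - p 0) • (EuclideanSpace.proj (1 : Fin 2) : E2 →L[ℝ] ℝ) -
    p 1 • (EuclideanSpace.proj (0 : Fin 2) : E2 →L[ℝ] ℝ)).smulRight (z'' - z')

lemma hasFDeriv_Phi (z z' z'' : E2) (p : E2) :
    HasFDerivAt (fun q : E2 => Phi z z' z'' (q 0) (q 1)) (dPhi z z' z'' p) p := by
  have h0 : HasFDerivAt (fun q : E2 => q 0)
      (EuclideanSpace.proj (0 : Fin 2) : E2 →L[ℝ] ℝ) p :=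
    (EuclideanSpace.proj (0 : Fin 2) : E2 →L[ℝ] ℝ).hasFDerivAt
  have h1 : HasFDerivAt (fun q : E2 => q 1)
      (EuclideanSpace.proj (1 : Fin 2) : E2 →L[ℝ] ℝ) p :=
    (EuclideanSpace.proj (1 : Fin 2) : E2 →L[ℝ] ℝ).hasFDerivAt
  have H := ((hasFDerivAt_const z' p).add
      (h0.smul (hasFDerivAt_const (z - z') p))).add
      ((h1.mul ((hasFDerivAt_const (1:ℝ) p).sub h0)).smul (hasFDerivAt_const (z'' - z') p))
  unfold Phi
  refine H.congr_fderiv ?_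
  refine ContinuousLinearMap.ext fun q => ?_
  simp only [ContinuousLinearMap.add_apply, ContinuousLinearMap.smulRight_apply,
    ContinuousLinearMap.sub_apply, ContinuousLinearMap.smul_apply, dPhi,
    ContinuousLinearMap.zero_apply, ContinuousLinearMap.coe_smul', Pi.smul_apply,
    PiLp.proj_apply, smul_eq_mul, ContinuousLinearMap.coe_sub',
    Pi.sub_apply, ContinuousLinearMap.coe_zero, Pi.zero_apply]
  module

lemma det_dPhi (z z' z'' : E2) (p : E2) :
    (dPhi z z' z'' p).det =
      (1 - p 0) * ((z - z') 0 * (z'' - z') 1 - (z - z') 1 * (z'' - z') 0) := by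
  set b := (EuclideanSpace.basisFun (Fin 2) ℝ).toBasis
  rw [ContinuousLinearMap.det, ← LinearMap.det_toMatrix b, Matrix.det_fin_two]
  have happ : ∀ (i j : Fin 2), LinearMap.toMatrix b b (dPhi z z' z'' p) i j
      = dPhi z z' z'' p (EuclideanSpace.single j 1) i := by
    intro i j
    rw [LinearMap.toMatrix_apply]
    simp [b, OrthonormalBasis.coe_toBasis_repr_apply, EuclideanSpace.basisFun_repr,
      OrthonormalBasis.coe_toBasis, EuclideanSpace.basisFun_apply]
  simp only [happ]
  simp only [dPhi, ContinuousLinearMap.add_apply, ContinuousLinearMap.smulRight_apply,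
    ContinuousLinearMap.sub_apply, ContinuousLinearMap.smul_apply,
    PiLp.proj_apply, EuclideanSpace.single_apply, smul_eq_mul,
    PiLp.add_apply, PiLp.smul_apply, PiLp.sub_apply]
  norm_num
  ring
end
noncomputable section
open MeasurableEquiv in
lemma key_cov (z z' z'' : E2) (hind : AffineIndependent ℝ ![z, z', z''])
    (f : E2 → ℝ) (hf : ContinuousOn f (convexHull ℝ {z, z', z''})) :
    ∫ x in convexHull ℝ {z, z', z''}, f x =
      |(z - z') 0 * (z'' - z') 1 - (z - z') 1 * (z'' - z') 0| *
        ∫ t in Icc (0:ℝ) 1, ((1 - t) * ∫ σ in Icc (0:ℝ) 1, f (Phi z z' z'' t σ)) := by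
  set T := convexHull ℝ ({z, z', z''} : Set E2) with hTdef
  set D := (z - z') 0 * (z'' - z') 1 - (z - z') 1 * (z'' - z') 0 with hDdef
  set Φ : E2 → E2 := fun p => Phi z z' z'' (p 0) (p 1) with hPhidef
  set s : Set E2 := {p | p 0 ∈ Ico (0:ℝ) 1 ∧ p 1 ∈ Icc (0:ℝ) 1} with hsdef
  set e : E2 ≃ᵐ ℝ × ℝ :=
    (MeasurableEquiv.toLp 2 (Fin 2 → ℝ)).symm.trans MeasurableEquiv.finTwoArrow with hedef
  have he : MeasurePreserving e volume volume :=
    (volume_preserving_finTwoArrow ℝ).comp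
      (EuclideanSpace.volume_preserving_symm_measurableEquiv_toLp (Fin 2))
  have he_apply : ∀ p : E2, e p = (p 0, p 1) := by
    intro p
    simp [hedef, MeasurableEquiv.trans_apply, MeasurableEquiv.coe_toLp_symm,
      MeasurableEquiv.finTwoArrow_apply]
  have hs_pre : s = e ⁻¹' (Ico (0:ℝ) 1 ×ˢ Icc (0:ℝ) 1) := by
    ext p
    simp [hsdef, he_apply p, Set.mem_prod]
  have hs : MeasurableSet s := by
    rw [hs_pre]
    exact e.measurable (measurableSet_Ico.prod measurableSet_Icc)
  have hderiv : ∀ p ∈ s, HasFDerivWithinAt Φ (dPhi z z' z'' p) s p := fun p _ =>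
    (hasFDeriv_Phi z z' z'' p).hasFDerivWithinAt
  have hinj : InjOn Φ s := by
    intro p hp q hq hpq
    have hsub : (p 0 - q 0) • (z - z') +
        (p 1 * (1 - p 0) - q 1 * (1 - q 0)) • (z'' - z') = 0 := by
      have h2 : (p 0 - q 0) • (z - z') +
          (p 1 * (1 - p 0) - q 1 * (1 - q 0)) • (z'' - z') = Φ p - Φ q := by
        simp only [hPhidef, Phi]; module
      rw [h2, hpq, sub_self]
    obtain ⟨h1, h2⟩ := indep_pair hind _ _ hsub
    have hp0 : p 0 = q 0 := sub_eq_zero.mp h1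
    have hp1 : p 1 = q 1 := by
      have hlt : p 0 < 1 := hp.1.2
      rw [hp0] at h2
      have hq0 : q 0 < 1 := hq.1.2
      have : (p 1 - q 1) * (1 - q 0) = 0 := by ring_nf; ring_nf at h2; linarith
      rcases mul_eq_zero.mp this with h | h
      · linarith
      · linarith
    exact e2_ext hp0 hp1
  have himgsub : Φ '' s ⊆ T := by
    rintro _ ⟨p, hp, rfl⟩
    rw [hTdef, T_eq]
    exact ⟨p 0, ⟨hp.1.1, hp.1.2.le⟩, p 1, hp.2, rfl⟩
  have himgsup : T ⊆ Φ '' s ∪ {z} := by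
    intro q hq
    rw [hTdef, T_eq] at hq
    obtain ⟨t, ht, σ, hσ, rfl⟩ := hq
    rcases ht.2.eq_or_lt with h1 | h1
    · right
      simp only [mem_singleton_iff]
      subst h1
      rw [Phi]; module
    · left
      refine ⟨(WithLp.equiv 2 (Fin 2 → ℝ)).symm ![t, σ], ⟨⟨ht.1, h1⟩, hσ⟩, ?_⟩
      rfl
  have hz0 : volume ({z} : Set E2) = 0 := measure_singleton z
  have hae : T =ᵐ[volume] Φ '' s := by
    rw [ae_eq_set]
    constructor
    · refine measure_mono_null (fun q hq => ?_) hz0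
      rcases himgsup hq.1 with h | h
      · exact absurd h hq.2
      · exact h
    · rw [diff_eq_empty.mpr himgsub]
      exact measure_empty
  have hcov := integral_image_eq_integral_abs_det_fderiv_smul volume hs hderiv hinj f
  have hPhicont : Continuous (fun q : ℝ × ℝ => Phi z z' z'' q.1 q.2) := by
    unfold Phi; fun_prop
  have hmaps : MapsTo (fun q : ℝ × ℝ => Phi z z' z'' q.1 q.2)
      (Icc (0:ℝ) 1 ×ˢ Icc (0:ℝ) 1) T := by
    rintro ⟨t, σ⟩ ⟨ht, hσ⟩
    rw [hTdef, T_eq]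
    exact ⟨t, ht, σ, hσ, rfl⟩
  set g : ℝ × ℝ → ℝ := fun q => ((1 - q.1) * |D|) * f (Phi z z' z'' q.1 q.2) with hgdef
  have hgcont : ContinuousOn g (Icc (0:ℝ) 1 ×ˢ Icc (0:ℝ) 1) := by
    apply ContinuousOn.mul
    · fun_prop
    · exact hf.comp hPhicont.continuousOn hmaps
  have hgint : IntegrableOn g (Ico (0:ℝ) 1 ×ˢ Icc (0:ℝ) 1) :=
    (hgcont.integrableOn_compact (isCompact_Icc.prod isCompact_Icc)).mono_set
      (prod_mono Ico_subset_Icc_self subset_rfl)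
  calc ∫ x in T, f x = ∫ x in Φ '' s, f x := setIntegral_congr_set hae
    _ = ∫ p in s, |(dPhi z z' z'' p).det| • f (Φ p) := hcov
    _ = ∫ p in s, g (e p) := by
        refine setIntegral_congr_fun hs fun p hp => ?_
        rw [det_dPhi, he_apply]
        have h1 : (0:ℝ) ≤ 1 - p 0 := by have := hp.1.2; linarith
        simp only [hgdef, smul_eq_mul]
        rw [abs_mul, abs_of_nonneg h1]
    _ = ∫ q in Ico (0:ℝ) 1 ×ˢ Icc (0:ℝ) 1, g q := by
        rw [hs_pre]
        exact he.setIntegral_preimage_emb e.measurableEmbedding g _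
    _ = ∫ t in Ico (0:ℝ) 1, ∫ σ in Icc (0:ℝ) 1, g (t, σ) := setIntegral_prod g hgint
    _ = ∫ t in Icc (0:ℝ) 1, ∫ σ in Icc (0:ℝ) 1, g (t, σ) := setIntegral_congr_set Ico_ae_eq_Icc
    _ = |D| * ∫ t in Icc (0:ℝ) 1, ((1 - t) * ∫ σ in Icc (0:ℝ) 1, f (Phi z z' z'' t σ)) := by
        rw [← integral_const_mul]
        refine setIntegral_congr_fun measurableSet_Icc fun t ht => ?_
        simp only [hgdef]
        rw [integral_const_mul]
        ring
end

/-- The Fubini-type slicing identity behind the averaging argument for (4b):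
with `a t = z'' + t(z - z'')` on `S'` and `b t = z' + t(z - z')` on `S''`,
for every `f` continuous on the triangle `T = conv {z, z', z''}`,
`∫₀¹ (∫_{[b t, a t]} f dH¹) dt = (|S| / (2|T|)) ⬝ ∫_T f`. -/
theorem slicing_identity
    (z z' z'' : EuclideanSpace ℝ (Fin 2))
    (hind : AffineIndependent ℝ ![z, z', z''])
    (T : Set (EuclideanSpace ℝ (Fin 2)))
    (hT : T = convexHull ℝ {z, z', z''})
    (a b : ℝ → EuclideanSpace ℝ (Fin 2))
    (ha : ∀ t, a t = z'' + t • (z - z''))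
    (hb : ∀ t, b t = z' + t • (z - z'))
    (f : EuclideanSpace ℝ (Fin 2) → ℝ)
    (hf : ContinuousOn f T) :
    ∫ t in Set.Icc (0 : ℝ) 1, (∫ x in segment ℝ (b t) (a t), f x ∂(μH[1])) =
      (dist z' z'' / (2 * (volume T).toReal)) * ∫ x in T, f x := by
  subst hT
  set D := (z - z') 0 * (z'' - z') 1 - (z - z') 1 * (z'' - z') 0 with hDdef
  have hD : D ≠ 0 := det_ne_zero hind
  have hDabs : (0:ℝ) < |D| := abs_pos.mpr hD
  have hhalf : ∫ t in Icc (0:ℝ) 1, (1 - t) = 1/2 := by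
    rw [integral_Icc_eq_integral_Ioc, ← intervalIntegral.integral_of_le zero_le_one,
      intervalIntegral.integral_sub intervalIntegrable_const
        intervalIntegral.intervalIntegrable_id,
      intervalIntegral.integral_const, integral_id]
    norm_num
  have hone : ∫ (σ : ℝ) in Icc (0:ℝ) 1, (1:ℝ) = 1 := by
    rw [setIntegral_const]
    simp [Real.volume_Icc]
  have hvol : (volume (convexHull ℝ ({z, z', z''} : Set E2))).toReal = |D| * (1/2) := by
    have h1 := key_cov z z' z'' hind (fun _ => 1) continuousOn_const
    rw [setIntegral_const, smul_eq_mul, mul_one] at h1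
    rw [← measureReal_def, h1, ← hhalf]
    congr 1
    refine setIntegral_congr_fun measurableSet_Icc fun t _ => ?_
    rw [hone, mul_one]
  have hkey := key_cov z z' z'' hind f hf
  rw [← hDdef] at hkey
  set I := ∫ t in Icc (0:ℝ) 1, ((1 - t) * ∫ σ in Icc (0:ℝ) 1, f (Phi z z' z'' t σ)) with hIdef
  have hlhs : ∫ t in Set.Icc (0 : ℝ) 1, (∫ x in segment ℝ (b t) (a t), f x ∂(μH[1]))
      = dist z' z'' * I := by
    rw [hIdef, ← integral_const_mul]
    refine setIntegral_congr_fun measurableSet_Icc fun t ht => ?_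
    have hbt : b t - a t = (1 - t) • (z' - z'') := by rw [ha, hb]; module
    have hdist : dist (b t) (a t) = (1 - t) * dist z' z'' := by
      rw [dist_eq_norm, hbt, norm_smul, Real.norm_eq_abs,
        abs_of_nonneg (by linarith [ht.2]), dist_eq_norm]
    have hpt : (fun σ : ℝ => f (b t + σ • (a t - b t)))
        = fun σ : ℝ => f (Phi z z' z'' t σ) := by
      funext σ
      congr 1
      rw [ha, hb, Phi]
      module
    rw [setIntegral_segment (b t) (a t) f, hdist, hpt]
    ring
  rw [hlhs, hkey, hvol]
  rw [show (2:ℝ) * (|D| * (1/2)) = |D| by ring]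
  rw [show dist z' z'' / |D| * (|D| * I) = dist z' z'' * I * (|D| / |D|) by ring,
    div_self (ne_of_gt hDabs), mul_one]
end

section
/- Let w : ℝ² → ℝ be continuously differentiable on an open set containing T. Then | |S'|⁻¹ ∫_{S'} w dH¹ − |S''|⁻¹ ∫_{S''} w dH¹ | ≤ (|S| / (2|T|)) · ∫_T |∇w(x)| dx. (This is the averaging estimate, a variant of Lemma 7.1 of [Kopt_17_NM], that the paper modifies to prove inequality (4b).) -/
open MeasureTheory

open Set ENNReal NNReal

set_option maxHeartbeats 1000000

noncomputable section

lemma vol_segment_zero (p q : EuclideanSpace ℝ (Fin 2)) : volume (segment ℝ p q) = 0 := by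
  have h1 : segment ℝ p q ⊆ (affineSpan ℝ ({p, q} : Set (EuclideanSpace ℝ (Fin 2))) : Set _) := by
    rw [← convexHull_pair]; exact convexHull_subset_affineSpan _
  refine measure_mono_null h1 (Measure.addHaar_affineSubspace _ _ ?_)
  intro h
  have hd : (affineSpan ℝ ({p, q} : Set (EuclideanSpace ℝ (Fin 2)))).direction = ⊤ := by
    rw [h]; exact AffineSubspace.direction_top _ _ _
  rw [direction_affineSpan, vectorSpan_pair] at hd
  have h2 : Module.finrank ℝ (Submodule.span ℝ {p -ᵥ q}) = 2 := by
    rw [hd, finrank_top]; exact finrank_euclideanSpace_fin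
  rcases eq_or_ne (p -ᵥ q) 0 with h0 | h0
  · rw [h0, Submodule.span_zero_singleton] at h2
    simp [finrank_bot] at h2
  · rw [finrank_span_singleton h0] at h2
    omega

lemma seg_integral (z v : EuclideanSpace ℝ (Fin 2)) (hv : v ≠ 0)
    (w : EuclideanSpace ℝ (Fin 2) → ℝ) :
    ∫ x in segment ℝ z (z + v), w x ∂(μH[1]) = ‖v‖ * ∫ t in Icc (0:ℝ) 1, w (z + t • v) := by
  set f : ℝ → EuclideanSpace ℝ (Fin 2) := fun t => AffineMap.lineMap z (z + v) t with hf
  have hfe : ∀ t, f t = z + t • v := by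
    intro t; simp [hf, AffineMap.lineMap_apply]; abel
  have hcont : Continuous f := AffineMap.lineMap_continuous
  have hinj : Function.Injective f := by
    intro a b hab
    rw [hfe, hfe] at hab
    have : a • v = b • v := by
      have := congrArg (fun x => x - z) hab; simpa [add_sub_cancel_left] using this
    exact smul_left_injective ℝ hv this
  have hemb : MeasurableEmbedding f := hcont.measurableEmbedding hinj
  have hseg : segment ℝ z (z + v) = f '' Icc 0 1 := by
    rw [segment_eq_image_lineMap]
  have hmap : (μH[1] : Measure (EuclideanSpace ℝ (Fin 2))).restrict (segment ℝ z (z + v))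
      = Measure.map f (((‖v‖₊ : ℝ≥0∞) • (volume : Measure ℝ)).restrict (Icc (0:ℝ) 1)) := by
    ext A hA
    rw [Measure.map_apply hemb.measurable hA, Measure.restrict_apply hA,
      Measure.restrict_apply (hemb.measurable hA), Measure.smul_apply]
    have himg : A ∩ segment ℝ z (z + v) = f '' (f ⁻¹' A ∩ Icc (0:ℝ) 1) := by
      rw [hseg, Set.image_inter hinj, Set.image_preimage_eq_inter_range, inter_assoc,
        Set.inter_eq_self_of_subset_right (image_subset_range _ _)]
    rw [himg]
    have hcoe : f '' (f ⁻¹' A ∩ Icc (0:ℝ) 1)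
        = ⇑(AffineMap.lineMap z (z + v)) '' (f ⁻¹' A ∩ Icc (0:ℝ) 1) := rfl
    rw [hcoe, MeasureTheory.hausdorffMeasure_lineMap_image, MeasureTheory.hausdorffMeasure_real]
    congr 1
    ext
    rw [coe_nndist, dist_self_add_right, coe_nnnorm]
  rw [show (∫ x in segment ℝ z (z + v), w x ∂(μH[1]))
      = ∫ x, w x ∂((μH[1] : Measure (EuclideanSpace ℝ (Fin 2))).restrict (segment ℝ z (z + v))) from rfl,
    hmap, hemb.integral_map, Measure.restrict_smul, integral_smul_measure]
  simp only [hfe]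
  rw [ENNReal.coe_toReal, coe_nnnorm]
  rfl

lemma dep_aux (z z' z'' : EuclideanSpace ℝ (Fin 2))
    (hind : AffineIndependent ℝ ![z, z', z'']) :
    ∀ a b : ℝ, a • (z' - z) + b • (z'' - z) = 0 → a = 0 ∧ b = 0 := by
  intro a b hab
  have h1 : (Finset.univ : Finset (Fin 3)).sum ![-(a + b), a, b] = 0 := by
    simp [Fin.sum_univ_three]
  have h2 : ∑ e ∈ (Finset.univ : Finset (Fin 3)), (![-(a + b), a, b] e) • (![z, z', z''] e) = 0 := by
    rw [Fin.sum_univ_three]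
    simp only [Matrix.cons_val_zero, Matrix.cons_val_one, Matrix.head_cons, Matrix.cons_val_two,
      Matrix.tail_cons]
    have he : (-(a + b)) • z + a • z' + b • z'' = a • (z' - z) + b • (z'' - z) := by module
    rw [he, hab]
  have h := affineIndependent_iff.mp hind Finset.univ ![-(a + b), a, b] h1 h2
  constructor
  · have := h 1 (Finset.mem_univ _); simpa using this
  · have := h 2 (Finset.mem_univ _); simpa using this

lemma det_aux (u' u : EuclideanSpace ℝ (Fin 2))
    (hdep : ∀ a b : ℝ, a • u' + b • u = 0 → a = 0 ∧ b = 0) :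
    u' 0 * u 1 - u' 1 * u 0 ≠ 0 := by
  intro hD0
  have coord : ∀ (a b : ℝ) (i : Fin 2), (a • u' + b • u) i = a * u' i + b * u i := by
    intro a b i
    simp [PiLp.add_apply, PiLp.smul_apply, smul_eq_mul]
  have h1 : (u 1) • u' + (-(u' 1)) • u = 0 := by
    refine PiLp.ext fun i => ?_
    rw [coord]
    fin_cases i
    · show u 1 * u' 0 + -(u' 1) * u 0 = (0 : EuclideanSpace ℝ (Fin 2)) 0
      simp only [PiLp.zero_apply]; nlinarith [hD0]
    · show u 1 * u' 1 + -(u' 1) * u 1 = (0 : EuclideanSpace ℝ (Fin 2)) 1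
      simp only [PiLp.zero_apply]; ring
  obtain ⟨hA, hB⟩ := hdep _ _ h1
  have hu'1 : u' 1 = 0 := by simpa using hB
  have h2 : (u 0) • u' + (-(u' 0)) • u = 0 := by
    refine PiLp.ext fun i => ?_
    rw [coord]
    fin_cases i
    · show u 0 * u' 0 + -(u' 0) * u 0 = (0 : EuclideanSpace ℝ (Fin 2)) 0
      simp only [PiLp.zero_apply]; ring
    · show u 0 * u' 1 + -(u' 0) * u 1 = (0 : EuclideanSpace ℝ (Fin 2)) 1
      simp only [PiLp.zero_apply, hu'1, hA]; ring
  obtain ⟨hC, hD⟩ := hdep _ _ h2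
  have hu'0 : u' 0 = 0 := by simpa using hD
  have hu' : u' = 0 := by
    refine PiLp.ext fun i => ?_
    fin_cases i
    · simpa using hu'0
    · simpa using hu'1
  exact one_ne_zero (hdep 1 0 (by simp [hu'])).1

def psiE : (ℝ × ℝ) ≃ᵐ EuclideanSpace ℝ (Fin 2) :=
  (MeasurableEquiv.piFinTwo (fun _ : Fin 2 => ℝ)).symm.trans
    (MeasurableEquiv.toLp 2 (Fin 2 → ℝ))

lemma psiE_mp : MeasurePreserving psiE volume volume :=
  ((EuclideanSpace.volume_preserving_symm_measurableEquiv_toLp (Fin 2)).symm _).comp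
    ((volume_preserving_piFinTwo (fun _ : Fin 2 => ℝ)).symm _)

lemma psiE_coord0 (p : ℝ × ℝ) : (psiE p) 0 = p.1 := by
  simp [psiE, MeasurableEquiv.trans_apply, MeasurableEquiv.coe_toLp,
    MeasurableEquiv.piFinTwo]

lemma psiE_coord1 (p : ℝ × ℝ) : (psiE p) 1 = p.2 := by
  simp [psiE, MeasurableEquiv.trans_apply, MeasurableEquiv.coe_toLp,
    MeasurableEquiv.piFinTwo]

lemma psiE_preQ : psiE ⁻¹' {x : EuclideanSpace ℝ (Fin 2) | x 0 ∈ Ioo (0:ℝ) 1 ∧ x 1 ∈ Ioo (0:ℝ) 1}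
    = Ioo (0:ℝ) 1 ×ˢ Ioo (0:ℝ) 1 := by
  ext p
  simp [psiE_coord0, psiE_coord1, Set.mem_prod]

end


/-- The averaging estimate (a variant of Lemma 7.1 of [Kopt_17_NM]) used to prove (4b):
for the triangle `T = conv {z, z', z''}` with edges `S = [z', z'']`, `S' = [z, z'']`,
`S'' = [z, z']`, and `w` continuously differentiable on an open set containing `T`,
`| |S'|⁻¹ ∫_{S'} w dH¹ − |S''|⁻¹ ∫_{S''} w dH¹ | ≤ (|S| / (2|T|)) ⬝ ∫_T |∇w|`. -/
theorem averaging_estimate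
    (z z' z'' : EuclideanSpace ℝ (Fin 2))
    (hind : AffineIndependent ℝ ![z, z', z''])
    (T : Set (EuclideanSpace ℝ (Fin 2)))
    (hT : T = convexHull ℝ {z, z', z''})
    (w : EuclideanSpace ℝ (Fin 2) → ℝ)
    (U : Set (EuclideanSpace ℝ (Fin 2)))
    (hU : IsOpen U) (hTU : T ⊆ U) (hw : ContDiffOn ℝ 1 w U) :
    |(dist z z'')⁻¹ * (∫ x in segment ℝ z z'', w x ∂(μH[1])) -
        (dist z z')⁻¹ * (∫ x in segment ℝ z z', w x ∂(μH[1]))| ≤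
      (dist z' z'' / (2 * (volume T).toReal)) * ∫ x in T, ‖gradient w x‖ := by
  classical
  have hdep : ∀ a b : ℝ, a • (z' - z) + b • (z'' - z) = 0 → a = 0 ∧ b = 0 := dep_aux z z' z'' hind
  set u' : EuclideanSpace ℝ (Fin 2) := z' - z with hu'def
  set u : EuclideanSpace ℝ (Fin 2) := z'' - z with hudef
  set dd : EuclideanSpace ℝ (Fin 2) := u - u' with hdddef
  have hu0 : u ≠ 0 := fun h => one_ne_zero ((hdep 0 1 (by rw [h]; simp)).2)
  have hu'0 : u' ≠ 0 := fun h => one_ne_zero ((hdep 1 0 (by rw [h]; simp)).1)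
  have hdep2 : ∀ a b : ℝ, a • u' + b • dd = 0 → a = 0 ∧ b = 0 := by
    intro a b hab
    rw [hdddef] at hab
    have h2 : (a - b) • u' + b • u = 0 := by
      have he : (a - b) • u' + b • u = a • u' + b • (u - u') := by module
      rw [he, hab]
    obtain ⟨h3, h4⟩ := hdep _ _ h2
    constructor
    · have : a - b = 0 := h3
      have : a = b := by linarith [sub_eq_zero.mp this]
      rw [this, h4]
    · exact h4
  set D : ℝ := u' 0 * u 1 - u' 1 * u 0 with hDdef
  have hD : D ≠ 0 := det_aux u' u hdep
  have hDd : u' 0 * dd 1 - u' 1 * dd 0 = D := by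
    rw [hDdef, hdddef]
    have h0 : (u - u') 0 = u 0 - u' 0 := rfl
    have h1 : (u - u') 1 = u 1 - u' 1 := rfl
    rw [h0, h1]; ring
  have hddz : dd = z'' - z' := by rw [hdddef, hudef, hu'def]; abel
  have hLd : dist z' z'' = ‖dd‖ := by rw [hddz, dist_eq_norm, norm_sub_rev]
  -- analytic facts about w
  have hwU : ContinuousOn w U := hw.continuousOn
  have hfdc : ContinuousOn (fderiv ℝ w) U := hw.continuousOn_fderiv_of_isOpen hU le_rfl
  have hdiff : ∀ x ∈ U, DifferentiableAt ℝ w x := fun x hx =>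
    (hw.differentiableOn one_ne_zero).differentiableAt (hU.mem_nhds hx)
  -- membership in T
  have hzm : (z : EuclideanSpace ℝ (Fin 2)) ∈ convexHull ℝ ({z, z', z''} : Set _) :=
    subset_convexHull _ _ (by simp)
  have hz'm : (z' : EuclideanSpace ℝ (Fin 2)) ∈ convexHull ℝ ({z, z', z''} : Set _) :=
    subset_convexHull _ _ (by simp)
  have hz''m : (z'' : EuclideanSpace ℝ (Fin 2)) ∈ convexHull ℝ ({z, z', z''} : Set _) :=
    subset_convexHull _ _ (by simp)
  have hmemT : ∀ s t : ℝ, s ∈ Icc (0:ℝ) 1 → t ∈ Icc (0:ℝ) 1 →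
      z + t • u' + (t * s) • dd ∈ T := by
    intro s t hs ht
    rw [hT]
    have hp : z' + s • (z'' - z') ∈ convexHull ℝ ({z, z', z''} : Set _) := by
      refine (convex_convexHull ℝ _).segment_subset hz'm hz''m ?_
      rw [segment_eq_image']
      exact ⟨s, hs, rfl⟩
    refine (convex_convexHull ℝ _).segment_subset hzm hp ?_
    rw [segment_eq_image']
    refine ⟨t, ht, ?_⟩
    rw [hdddef, hudef, hu'def]
    module
  have hmemu : ∀ t ∈ Icc (0:ℝ) 1, z + t • u ∈ T := by
    intro t ht
    have := hmemT 1 t (by constructor <;> norm_num) ht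
    have he : z + t • u' + (t * 1) • dd = z + t • u := by rw [hdddef]; module
    rwa [he] at this
  have hmemu' : ∀ t ∈ Icc (0:ℝ) 1, z + t • u' ∈ T := by
    intro t ht
    have := hmemT 0 t (by constructor <;> norm_num) ht
    have he : z + t • u' + (t * 0) • dd = z + t • u' := by module
    rwa [he] at this
  -- step A : averages as interval integrals
  have havg : ∀ v : EuclideanSpace ℝ (Fin 2), v ≠ 0 →
      (dist z (z + v))⁻¹ * ∫ x in segment ℝ z (z + v), w x ∂(μH[1])
        = ∫ t in Icc (0:ℝ) 1, w (z + t • v) := by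
    intro v hv
    rw [seg_integral z v hv w, dist_self_add_right, ← mul_assoc,
      inv_mul_cancel₀ (norm_ne_zero_iff.mpr hv), one_mul]
  have hz''e : z'' = z + u := by rw [hudef]; abel
  have hz'e : z' = z + u' := by rw [hu'def]; abel
  have hA1 : (dist z z'')⁻¹ * ∫ x in segment ℝ z z'', w x ∂(μH[1])
      = ∫ t in Icc (0:ℝ) 1, w (z + t • u) := by
    rw [show z'' = z + u from hz''e]; exact havg u hu0
  have hA2 : (dist z z')⁻¹ * ∫ x in segment ℝ z z', w x ∂(μH[1])
      = ∫ t in Icc (0:ℝ) 1, w (z + t • u') := by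
    rw [show z' = z + u' from hz'e]; exact havg u' hu'0
  -- integrabilities on [0,1]
  have hcu : ContinuousOn (fun t : ℝ => w (z + t • u)) (Icc 0 1) := by
    refine hwU.comp (Continuous.continuousOn ?_) fun t ht => hTU (hmemu t ht)
    exact continuous_const.add (continuous_id.smul continuous_const)
  have hcu' : ContinuousOn (fun t : ℝ => w (z + t • u')) (Icc 0 1) := by
    refine hwU.comp (Continuous.continuousOn ?_) fun t ht => hTU (hmemu' t ht)
    exact continuous_const.add (continuous_id.smul continuous_const)
  have hIu : IntegrableOn (fun t : ℝ => w (z + t • u)) (Icc 0 1) volume :=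
    hcu.integrableOn_compact isCompact_Icc
  have hIu' : IntegrableOn (fun t : ℝ => w (z + t • u')) (Icc 0 1) volume :=
    hcu'.integrableOn_compact isCompact_Icc
  -- the product-variable bound function
  set B : ℝ × ℝ → ℝ :=
    fun p => dist z' z'' * (p.1 * ‖fderiv ℝ w (z + p.1 • u' + (p.1 * p.2) • dd)‖) with hBdef
  have hφcont : Continuous (fun p : ℝ × ℝ => z + p.1 • u' + (p.1 * p.2) • dd) :=
    (continuous_const.add (continuous_fst.smul continuous_const)).add
      ((continuous_fst.mul continuous_snd).smul continuous_const)
  have hφmem : ∀ p ∈ (Icc (0:ℝ) 1 ×ˢ Icc (0:ℝ) 1),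
      (z + p.1 • u' + (p.1 * p.2) • dd) ∈ U := fun p hp => hTU (hmemT p.2 p.1 hp.2 hp.1)
  have hBcont : ContinuousOn B (Icc (0:ℝ) 1 ×ˢ Icc (0:ℝ) 1) := by
    rw [hBdef]
    exact continuousOn_const.mul (continuous_fst.continuousOn.mul
      ((hfdc.comp hφcont.continuousOn hφmem).norm))
  have hBint : IntegrableOn B (Icc (0:ℝ) 1 ×ˢ Icc (0:ℝ) 1) volume :=
    hBcont.integrableOn_compact (isCompact_Icc.prod isCompact_Icc)
  have hBint' : Integrable (fun q : ℝ × ℝ => B (q.1, q.2))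
      ((volume.restrict (Icc (0:ℝ) 1)).prod (volume.restrict (Icc (0:ℝ) 1))) := by
    rw [Measure.prod_restrict]
    exact hBint
  -- pointwise key estimate
  have hkey : ∀ t ∈ Icc (0:ℝ) 1,
      |w (z + t • u) - w (z + t • u')| ≤ ∫ s in Icc (0:ℝ) 1, B (t, s) := by
    intro t ht
    set γ : ℝ → EuclideanSpace ℝ (Fin 2) := fun s => (z + t • u') + s • (t • dd) with hγdef
    have hγeq : ∀ s, γ s = z + t • u' + (t * s) • dd := by
      intro s
      rw [hγdef]
      show (z + t • u') + s • (t • dd) = z + t • u' + (t * s) • dd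
      rw [smul_smul, mul_comm]
    have hγT : ∀ s ∈ Icc (0:ℝ) 1, γ s ∈ T := fun s hs => by
      rw [hγeq s]; exact hmemT s t hs ht
    have hγU : ∀ s ∈ Icc (0:ℝ) 1, γ s ∈ U := fun s hs => hTU (hγT s hs)
    have hγcont : Continuous γ := continuous_const.add (continuous_id.smul continuous_const)
    have hder : ∀ s ∈ uIcc (0:ℝ) 1,
        HasDerivAt (fun s => w (γ s)) ((fderiv ℝ w (γ s)) (t • dd)) s := by
      intro s hs
      rw [uIcc_of_le zero_le_one] at hs
      have h1 : HasDerivAt γ (t • dd) s := by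
        have := ((hasDerivAt_id s).smul_const (t • dd)).const_add (z + t • u')
        simpa [hγdef] using this
      exact (hdiff _ (hγU s hs)).hasFDerivAt.comp_hasDerivAt s h1
    have hcontf : ContinuousOn (fun s => fderiv ℝ w (γ s)) (Icc 0 1) :=
      hfdc.comp hγcont.continuousOn hγU
    have hcontder : ContinuousOn (fun s => (fderiv ℝ w (γ s)) (t • dd)) (Icc 0 1) :=
      hcontf.clm_apply continuousOn_const
    have hII : IntervalIntegrable (fun s => (fderiv ℝ w (γ s)) (t • dd)) volume 0 1 := by
      apply ContinuousOn.intervalIntegrable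
      rwa [uIcc_of_le zero_le_one]
    have hFTC := intervalIntegral.integral_eq_sub_of_hasDerivAt hder hII
    have hγ1 : γ 1 = z + t • u := by
      rw [hγeq 1, hdddef]; module
    have hγ0 : γ 0 = z + t • u' := by
      rw [hγeq 0]; simp
    have hII2 : IntervalIntegrable (fun s => |(fderiv ℝ w (γ s)) (t • dd)|) volume 0 1 := by
      apply ContinuousOn.intervalIntegrable
      rw [uIcc_of_le zero_le_one]
      exact hcontder.abs
    have hII3 : IntervalIntegrable
        (fun s => dist z' z'' * (t * ‖fderiv ℝ w (γ s)‖)) volume 0 1 := by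
      apply ContinuousOn.intervalIntegrable
      rw [uIcc_of_le zero_le_one]
      exact continuousOn_const.mul (continuousOn_const.mul hcontf.norm)
    calc |w (z + t • u) - w (z + t • u')|
        = |∫ s in (0:ℝ)..1, (fderiv ℝ w (γ s)) (t • dd)| := by rw [hFTC, hγ1, hγ0]
      _ ≤ ∫ s in (0:ℝ)..1, |(fderiv ℝ w (γ s)) (t • dd)| := by
          simpa only [Real.norm_eq_abs] using
            intervalIntegral.norm_integral_le_integral_norm
              (f := fun s => (fderiv ℝ w (γ s)) (t • dd)) (zero_le_one)
      _ ≤ ∫ s in (0:ℝ)..1, dist z' z'' * (t * ‖fderiv ℝ w (γ s)‖) := by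
          refine intervalIntegral.integral_mono_on zero_le_one hII2 hII3 fun s hs => ?_
          have h3 : |(fderiv ℝ w (γ s)) (t • dd)| ≤ ‖fderiv ℝ w (γ s)‖ * ‖t • dd‖ := by
            rw [← Real.norm_eq_abs]
            exact ContinuousLinearMap.le_opNorm _ _
          have h4 : ‖t • dd‖ = t * ‖dd‖ := by
            rw [norm_smul, Real.norm_eq_abs, abs_of_nonneg ht.1]
          calc |(fderiv ℝ w (γ s)) (t • dd)| ≤ ‖fderiv ℝ w (γ s)‖ * (t * ‖dd‖) := by
                rw [← h4]; exact h3
            _ = dist z' z'' * (t * ‖fderiv ℝ w (γ s)‖) := by rw [hLd]; ring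
      _ = ∫ s in Icc (0:ℝ) 1, dist z' z'' * (t * ‖fderiv ℝ w (γ s)‖) := by
          rw [intervalIntegral.integral_of_le zero_le_one, integral_Icc_eq_integral_Ioc]
      _ = ∫ s in Icc (0:ℝ) 1, B (t, s) := by
          refine setIntegral_congr_fun measurableSet_Icc fun s _ => ?_
          rw [hγeq s, hBdef]
  -- outer estimate
  have hbound : |(∫ t in Icc (0:ℝ) 1, w (z + t • u)) - ∫ t in Icc (0:ℝ) 1, w (z + t • u')|
      ≤ ∫ t in Icc (0:ℝ) 1, ∫ s in Icc (0:ℝ) 1, B (t, s) := by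
    rw [← integral_sub hIu hIu']
    calc |∫ t in Icc (0:ℝ) 1, (w (z + t • u) - w (z + t • u'))|
        ≤ ∫ t in Icc (0:ℝ) 1, |w (z + t • u) - w (z + t • u')| := by
          simpa [Real.norm_eq_abs] using
            norm_integral_le_integral_norm (μ := volume.restrict (Icc (0:ℝ) 1))
              (f := fun t => w (z + t • u) - w (z + t • u'))
      _ ≤ ∫ t in Icc (0:ℝ) 1, ∫ s in Icc (0:ℝ) 1, B (t, s) := by
          refine setIntegral_mono_on ((hIu.sub hIu').abs) ?_ measurableSet_Icc hkey
          exact hBint'.integral_prod_left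
  -- Fubini
  have hfub : ∫ t in Icc (0:ℝ) 1, ∫ s in Icc (0:ℝ) 1, B (t, s)
      = ∫ p in Icc (0:ℝ) 1 ×ˢ Icc (0:ℝ) 1, B p := by
    rw [show (∫ p in Icc (0:ℝ) 1 ×ˢ Icc (0:ℝ) 1, B p)
        = ∫ p, B p ∂((volume.restrict (Icc (0:ℝ) 1)).prod (volume.restrict (Icc (0:ℝ) 1))) from by
      rw [Measure.prod_restrict]; rfl]
    rw [MeasureTheory.integral_integral hBint']
  -- the square and the parametrization map
  set Q : Set (EuclideanSpace ℝ (Fin 2)) :=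
    {x : EuclideanSpace ℝ (Fin 2) | x 0 ∈ Ioo (0:ℝ) 1 ∧ x 1 ∈ Ioo (0:ℝ) 1} with hQdef
  have hc : ∀ i : Fin 2, ⇑(EuclideanSpace.proj i : EuclideanSpace ℝ (Fin 2) →L[ℝ] ℝ)
      = fun y : EuclideanSpace ℝ (Fin 2) => y i := by
    intro i; funext y; simp [PiLp.proj_apply]
  have hm0 : Measurable (fun x : EuclideanSpace ℝ (Fin 2) => x 0) := by
    have := (EuclideanSpace.proj (0 : Fin 2) :
      EuclideanSpace ℝ (Fin 2) →L[ℝ] ℝ).continuous.measurable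
    rwa [hc 0] at this
  have hm1 : Measurable (fun x : EuclideanSpace ℝ (Fin 2) => x 1) := by
    have := (EuclideanSpace.proj (1 : Fin 2) :
      EuclideanSpace ℝ (Fin 2) →L[ℝ] ℝ).continuous.measurable
    rwa [hc 1] at this
  have hQm : MeasurableSet Q := by
    have : Q = (fun x : EuclideanSpace ℝ (Fin 2) => x 0) ⁻¹' (Ioo 0 1)
        ∩ (fun x : EuclideanSpace ℝ (Fin 2) => x 1) ⁻¹' (Ioo 0 1) := rfl
    rw [this]
    exact (hm0 measurableSet_Ioo).inter (hm1 measurableSet_Ioo)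
  set Φ : EuclideanSpace ℝ (Fin 2) → EuclideanSpace ℝ (Fin 2) :=
    fun x => z + (x 0) • u' + ((x 0) * (x 1)) • dd with hΦdef
  set Φ' : EuclideanSpace ℝ (Fin 2) → (EuclideanSpace ℝ (Fin 2) →L[ℝ] EuclideanSpace ℝ (Fin 2)) :=
    fun x => (EuclideanSpace.proj (0 : Fin 2)).smulRight u'
        + ((x 0) • (EuclideanSpace.proj (1 : Fin 2) : EuclideanSpace ℝ (Fin 2) →L[ℝ] ℝ)
            + (x 1) • (EuclideanSpace.proj (0 : Fin 2) :
                EuclideanSpace ℝ (Fin 2) →L[ℝ] ℝ)).smulRight dd with hΦ'def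
  have hΦder : ∀ x : EuclideanSpace ℝ (Fin 2), HasFDerivAt Φ (Φ' x) x := by
    intro x
    have h0 : HasFDerivAt (fun y : EuclideanSpace ℝ (Fin 2) => y 0)
        (EuclideanSpace.proj (0 : Fin 2) : EuclideanSpace ℝ (Fin 2) →L[ℝ] ℝ) x := by
      have := (EuclideanSpace.proj (0 : Fin 2) :
        EuclideanSpace ℝ (Fin 2) →L[ℝ] ℝ).hasFDerivAt (x := x)
      rwa [hc 0] at this
    have h1 : HasFDerivAt (fun y : EuclideanSpace ℝ (Fin 2) => y 1)
        (EuclideanSpace.proj (1 : Fin 2) : EuclideanSpace ℝ (Fin 2) →L[ℝ] ℝ) x := by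
      have := (EuclideanSpace.proj (1 : Fin 2) :
        EuclideanSpace ℝ (Fin 2) →L[ℝ] ℝ).hasFDerivAt (x := x)
      rwa [hc 1] at this
    exact ((h0.smul_const u').const_add z).add ((h0.mul h1).smul_const dd)
  have hΦdet : ∀ x : EuclideanSpace ℝ (Fin 2), (Φ' x).det = x 0 * D := by
    intro x
    have hrfl : (Φ' x).det = LinearMap.det ((Φ' x) : EuclideanSpace ℝ (Fin 2) →ₗ[ℝ] EuclideanSpace ℝ (Fin 2)) := rfl
    rw [hrfl, ← LinearMap.det_toMatrix (EuclideanSpace.basisFun (Fin 2) ℝ).toBasis,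
      Matrix.det_fin_two]
    simp only [LinearMap.toMatrix_apply, OrthonormalBasis.coe_toBasis,
      OrthonormalBasis.coe_toBasis_repr_apply, EuclideanSpace.basisFun_repr,
      EuclideanSpace.basisFun_apply, ContinuousLinearMap.coe_coe, hΦ'def,
      ContinuousLinearMap.add_apply, ContinuousLinearMap.smulRight_apply,
      ContinuousLinearMap.smul_apply, PiLp.proj_apply, PiLp.add_apply, PiLp.smul_apply,
      smul_eq_mul, EuclideanSpace.single_apply]
    simp
    rw [← hDd]
    ring
  have hΦinj : InjOn Φ Q := by
    intro x hx y hy hxy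
    have h2 : (x 0 - y 0) • u' + (x 0 * x 1 - y 0 * y 1) • dd = 0 := by
      have h3 : Φ x - Φ y = 0 := sub_eq_zero.mpr hxy
      have h4 : Φ x - Φ y = (x 0 - y 0) • u' + (x 0 * x 1 - y 0 * y 1) • dd := by
        rw [hΦdef]; module
      rw [h4] at h3; exact h3
    obtain ⟨ha, hb⟩ := hdep2 _ _ h2
    have h00 : x 0 = y 0 := sub_eq_zero.mp ha
    have h01 : x 0 * x 1 = y 0 * y 1 := sub_eq_zero.mp hb
    have hx0 : x 0 ≠ 0 := ne_of_gt hx.1.1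
    have h11 : x 1 = y 1 := by
      rw [h00] at h01 hx0
      exact mul_left_cancel₀ hx0 h01
    refine PiLp.ext fun i => ?_
    fin_cases i
    · exact h00
    · exact h11
  have hchg : ∀ g : EuclideanSpace ℝ (Fin 2) → ℝ,
      ∫ x in Φ '' Q, g x = ∫ x in Q, |(Φ' x).det| • g (Φ x) := fun g =>
    integral_image_eq_integral_abs_det_fderiv_smul volume hQm
      (fun x _ => (hΦder x).hasFDerivWithinAt) hΦinj g
  have hΦQT : Φ '' Q ⊆ T := by
    rintro _ ⟨x, hx, rfl⟩
    exact hmemT (x 1) (x 0) (Ioo_subset_Icc_self hx.2) (Ioo_subset_Icc_self hx.1)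
  have hTsub : T \ Φ '' Q ⊆ (segment ℝ z z' ∪ segment ℝ z z'') ∪ segment ℝ z' z'' := by
    rintro x ⟨hxT, hxn⟩
    rw [hT] at hxT
    rw [show ({z, z', z''} : Set (EuclideanSpace ℝ (Fin 2))) = insert z {z', z''} from rfl,
      convexHull_insert ⟨z', by simp⟩, mem_convexJoin] at hxT
    obtain ⟨a0, ha0, p, hp, hx⟩ := hxT
    rw [mem_singleton_iff] at ha0
    rw [ha0] at hx
    rw [convexHull_pair] at hp
    rw [segment_eq_image'] at hx
    obtain ⟨θ, hθ, hxe⟩ := hx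
    rw [segment_eq_image'] at hp
    obtain ⟨σ, hσ, hpe⟩ := hp
    by_cases hθ0 : θ = 0
    · left; left
      have : x = z := by rw [← hxe, hθ0]; simp
      rw [this]; exact left_mem_segment _ _ _
    · by_cases hθ1 : θ = 1
      · right
        have : x = p := by rw [← hxe, hθ1]; module
        rw [this, segment_eq_image']
        exact ⟨σ, hσ, hpe⟩
      · by_cases hσ0 : σ = 0
        · left; left
          have hpz : p = z' := by rw [← hpe, hσ0]; simp
          rw [segment_eq_image']
          refine ⟨θ, hθ, ?_⟩
          rw [← hxe, hpz]
        · by_cases hσ1 : σ = 1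
          · left; right
            have hpz : p = z'' := by rw [← hpe, hσ1]; module
            rw [segment_eq_image']
            refine ⟨θ, hθ, ?_⟩
            rw [← hxe, hpz]
          · exfalso
            apply hxn
            refine ⟨(show EuclideanSpace ℝ (Fin 2) from !₂[θ, σ]), ⟨?_, ?_⟩, ?_⟩
            · show θ ∈ Ioo (0:ℝ) 1
              exact ⟨lt_of_le_of_ne hθ.1 (Ne.symm hθ0), lt_of_le_of_ne hθ.2 hθ1⟩
            · show σ ∈ Ioo (0:ℝ) 1
              exact ⟨lt_of_le_of_ne hσ.1 (Ne.symm hσ0), lt_of_le_of_ne hσ.2 hσ1⟩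
            · show z + θ • u' + (θ * σ) • dd = x
              rw [← hxe, ← hpe, hdddef, hudef, hu'def]
              module
  have haeT : Φ '' Q =ᵐ[volume] T := by
    rw [MeasureTheory.ae_eq_set]
    constructor
    · rw [diff_eq_empty.mpr hΦQT]; exact measure_empty
    · refine measure_mono_null hTsub ?_
      exact measure_union_null
        (measure_union_null (vol_segment_zero _ _) (vol_segment_zero _ _))
        (vol_segment_zero _ _)
  -- transfers to Q
  have htr0 : ∫ p in Ioo (0:ℝ) 1 ×ˢ Ioo (0:ℝ) 1, p.1 = ∫ x in Q, (x 0) := by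
    have h := psiE_mp.setIntegral_preimage_emb psiE.measurableEmbedding
      (fun x : EuclideanSpace ℝ (Fin 2) => x 0) Q
    rw [hQdef, psiE_preQ] at h
    rw [← h]
    refine setIntegral_congr_fun (measurableSet_Ioo.prod measurableSet_Ioo) fun p _ => ?_
    rw [psiE_coord0]
  have htr1 : ∫ p in Ioo (0:ℝ) 1 ×ˢ Ioo (0:ℝ) 1, B p
      = dist z' z'' * ∫ x in Q, (x 0) * ‖fderiv ℝ w (Φ x)‖ := by
    have h := psiE_mp.setIntegral_preimage_emb psiE.measurableEmbedding
      (fun x : EuclideanSpace ℝ (Fin 2) =>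
        dist z' z'' * ((x 0) * ‖fderiv ℝ w (Φ x)‖)) Q
    rw [hQdef, psiE_preQ] at h
    rw [← integral_const_mul, ← h]
    refine setIntegral_congr_fun (measurableSet_Ioo.prod measurableSet_Ioo) fun p _ => ?_
    rw [hBdef, hΦdef]
    simp only [psiE_coord0, psiE_coord1]
  -- value of the half integral
  have hhalf : ∫ x in Q, (x 0) = 1 / 2 := by
    rw [← htr0]
    have hIp : Integrable (fun p : ℝ × ℝ => p.1)
        ((volume.restrict (Ioo (0:ℝ) 1)).prod (volume.restrict (Ioo (0:ℝ) 1))) := by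
      rw [Measure.prod_restrict]
      refine IntegrableOn.mono_set ?_ (prod_mono Ioo_subset_Icc_self Ioo_subset_Icc_self)
      exact (continuous_fst.continuousOn).integrableOn_compact (isCompact_Icc.prod isCompact_Icc)
    rw [show (∫ p in Ioo (0:ℝ) 1 ×ˢ Ioo (0:ℝ) 1, p.1)
        = ∫ p, p.1 ∂((volume.restrict (Ioo (0:ℝ) 1)).prod (volume.restrict (Ioo (0:ℝ) 1))) from by
      rw [Measure.prod_restrict]; rfl]
    rw [MeasureTheory.integral_prod _ hIp]
    have hinner : ∀ t : ℝ, (∫ _ in Ioo (0:ℝ) 1, t) = t := by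
      intro t
      rw [setIntegral_const]
      simp [Real.volume_Ioo]
    simp only [hinner]
    rw [← MeasureTheory.integral_Ioc_eq_integral_Ioo,
      ← intervalIntegral.integral_of_le zero_le_one, integral_id]
    norm_num
  -- volume of T
  have hvolT : (volume T).toReal = |D| / 2 := by
    have h1 := hchg (fun _ => (1:ℝ))
    rw [setIntegral_const] at h1
    have h2 : (volume (Φ '' Q)).toReal = (volume T).toReal := by
      rw [measure_congr haeT]
    rw [measureReal_def, h2] at h1
    have h3 : ∫ x in Q, |(Φ' x).det| • (1:ℝ) = |D| * ∫ x in Q, (x 0) := by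
      rw [← integral_const_mul]
      refine setIntegral_congr_fun hQm fun x hx => ?_
      rw [hΦdet, smul_eq_mul, mul_one, abs_mul, abs_of_pos hx.1.1]
      ring
    rw [h3, hhalf] at h1
    rw [smul_eq_mul, mul_one] at h1
    rw [h1]; ring
  -- gradient integral over T
  have hIT : ∫ x in T, ‖gradient w x‖ = |D| * ∫ x in Q, (x 0) * ‖fderiv ℝ w (Φ x)‖ := by
    have hgrad : ∀ x, ‖gradient w x‖ = ‖fderiv ℝ w x‖ := fun x => by
      rw [gradient]; exact LinearIsometryEquiv.norm_map _ _
    calc ∫ x in T, ‖gradient w x‖ = ∫ x in T, ‖fderiv ℝ w x‖ := by simp only [hgrad]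
      _ = ∫ x in Φ '' Q, ‖fderiv ℝ w x‖ := (setIntegral_congr_set haeT).symm
      _ = ∫ x in Q, |(Φ' x).det| • ‖fderiv ℝ w (Φ x)‖ := hchg _
      _ = |D| * ∫ x in Q, (x 0) * ‖fderiv ℝ w (Φ x)‖ := by
          rw [← integral_const_mul]
          refine setIntegral_congr_fun hQm fun x hx => ?_
          rw [hΦdet, smul_eq_mul, abs_mul, abs_of_pos hx.1.1]
          ring
  -- a.e. equality of the squares
  have haesq : (Icc (0:ℝ) 1 ×ˢ Icc (0:ℝ) 1 : Set (ℝ × ℝ)) =ᵐ[volume]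
      (Ioo (0:ℝ) 1 ×ˢ Ioo (0:ℝ) 1 : Set (ℝ × ℝ)) := by
    rw [MeasureTheory.ae_eq_set]
    constructor
    · refine measure_mono_null
        (?_ : _ ⊆ (({0, 1} : Set ℝ) ×ˢ (univ : Set ℝ)) ∪ ((univ : Set ℝ) ×ˢ ({0, 1} : Set ℝ))) ?_
      · rintro p ⟨⟨hp1, hp2⟩, hnp⟩
        by_cases h1 : p.1 ∈ Ioo (0:ℝ) 1
        · by_cases h2 : p.2 ∈ Ioo (0:ℝ) 1
          · exact absurd ⟨h1, h2⟩ hnp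
          · right
            refine ⟨mem_univ _, ?_⟩
            rcases eq_or_lt_of_le hp2.1 with h | h
            · left; exact h.symm
            · rcases eq_or_lt_of_le hp2.2 with h' | h'
              · right; exact h'
              · exact absurd ⟨h, h'⟩ h2
        · left
          refine ⟨?_, mem_univ _⟩
          rcases eq_or_lt_of_le hp1.1 with h | h
          · left; exact h.symm
          · rcases eq_or_lt_of_le hp1.2 with h' | h'
            · right; exact h'
            · exact absurd ⟨h, h'⟩ h1
      · refine measure_union_null ?_ ?_
        · rw [Measure.volume_eq_prod, Measure.prod_prod,
            Set.Countable.measure_zero (by simp : ({0, 1} : Set ℝ).Countable) volume, zero_mul]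
        · rw [Measure.volume_eq_prod, Measure.prod_prod,
            Set.Countable.measure_zero (by simp : ({0, 1} : Set ℝ).Countable) volume, mul_zero]
    · refine measure_mono_null ?_ (measure_empty (μ := (volume : Measure (ℝ × ℝ))))
      rw [diff_eq_empty.mpr (prod_mono Ioo_subset_Icc_self Ioo_subset_Icc_self)]
  -- final computation
  calc |(dist z z'')⁻¹ * (∫ x in segment ℝ z z'', w x ∂(μH[1])) -
        (dist z z')⁻¹ * (∫ x in segment ℝ z z', w x ∂(μH[1]))|
      = |(∫ t in Icc (0:ℝ) 1, w (z + t • u)) - ∫ t in Icc (0:ℝ) 1, w (z + t • u')| := by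
        rw [hA1, hA2]
    _ ≤ ∫ t in Icc (0:ℝ) 1, ∫ s in Icc (0:ℝ) 1, B (t, s) := hbound
    _ = ∫ p in Icc (0:ℝ) 1 ×ˢ Icc (0:ℝ) 1, B p := hfub
    _ = ∫ p in Ioo (0:ℝ) 1 ×ˢ Ioo (0:ℝ) 1, B p := setIntegral_congr_set haesq
    _ = dist z' z'' * ∫ x in Q, (x 0) * ‖fderiv ℝ w (Φ x)‖ := htr1
    _ = (dist z' z'' / (2 * (volume T).toReal)) * ∫ x in T, ‖gradient w x‖ := by
        rw [hIT, hvolT]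
        have habs : |D| ≠ 0 := abs_ne_zero.mpr hD
        field_simp
end
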